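/- Let L = ℤ^n, A, B ⊆ L primitive sublattices with (A⊗ℂ) ∩ (B⊗ℂ) = 0, and let g_1,...,g_b be a ℤ-basis of B adapted as in the Smith normal form construction, with elementary divisors d_1 | ... | d_b of the image of B in L/A. Then the map θ : ⊕_j ℤ/d_jℤ → exp_L(A⊗ℂ) ∩ exp_L(B⊗ℂ) sending (k_1,...,k_b) to exp_L(Σ_j (k_j/d_j) g_j) is an injective group homomorphism. -/

import Mathlib

open Complex

/-- The exponential `t ↦ e^{2πit}` as a unit of `ℂ`. -/
noncomputable def expu (t : ℂ) : ℂˣ :=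
  Units.mk0 (Complex.exp (2 * Real.pi * Complex.I * t)) (Complex.exp_ne_zero _)

/-- The coordinatewise exponential `exp_L : ℂⁿ → (ℂ*)ⁿ` as a group homomorphism. -/
noncomputable def expL (n : ℕ) : Multiplicative (Fin n → ℂ) →* (Fin n → ℂˣ) where
  toFun t i := expu (Multiplicative.toAdd t i)
  map_one' := by
    funext i
    apply Units.ext
    simp [expu]
  map_mul' a b := by
    funext i
    apply Units.ext
    simp [expu, mul_add, Complex.exp_add]

/-- Inclusion of the lattice `ℤⁿ` into `ℂⁿ`. -/
def zc {n : ℕ} (v : Fin n → ℤ) : Fin n → ℂ := fun i => (v i : ℂ)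

/-- The complexification `A ⊗ ℂ` of a sublattice `A ⊆ ℤⁿ`, as the ℂ-span of `A` in `ℂⁿ`. -/
noncomputable def VC {n : ℕ} (A : Submodule ℤ (Fin n → ℤ)) : Submodule ℂ (Fin n → ℂ) :=
  Submodule.span ℂ (zc '' (A : Set (Fin n → ℤ)))

/-- The subtorus `exp_L(V)` of `(ℂ*)ⁿ` associated to a ℂ-subspace `V ⊆ ℂⁿ`. -/
noncomputable def expT {n : ℕ} (V : Submodule ℂ (Fin n → ℂ)) : Subgroup (Fin n → ℂˣ) :=
  Subgroup.map (expL n) (AddSubgroup.toSubgroup V.toAddSubgroup)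

/-- A sublattice `A ⊆ ℤⁿ` is primitive if `ℤⁿ/A` is torsion-free. -/
def IsPrimitive {n : ℕ} (A : Submodule ℤ (Fin n → ℤ)) : Prop :=
  ∀ (m : ℤ) (x : Fin n → ℤ), m ≠ 0 → m • x ∈ A → x ∈ A

/-- With `A, B ⊆ ℤⁿ` primitive, `(A⊗ℂ) ∩ (B⊗ℂ) = 0`, and `g₁,...,g_b` a ℤ-basis of `B`
adapted to the Smith normal form of the image of `B` in `ℤⁿ/A` with elementary divisors
`d₁ | ... | d_b`, the map `θ : ⊕ⱼ ℤ/dⱼℤ → exp_L(A⊗ℂ) ∩ exp_L(B⊗ℂ)` sending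
`(k₁,...,k_b)` to `exp_L(Σⱼ (kⱼ/dⱼ) gⱼ)` is a well-defined injective group homomorphism. -/
lemma expu_intCast (m : ℤ) : expu (m : ℂ) = 1 := by
  apply Units.ext
  show Complex.exp _ = 1
  rw [show 2 * (Real.pi : ℂ) * Complex.I * (m : ℂ) = (m : ℂ) * (2 * Real.pi * Complex.I) by ring]
  exact Complex.exp_int_mul_two_pi_mul_I m

lemma expu_eq_one {t : ℂ} (h : expu t = 1) : ∃ m : ℤ, t = m := by
  have h1 : Complex.exp (2 * Real.pi * Complex.I * t) = 1 := congrArg Units.val h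
  rw [Complex.exp_eq_one_iff] at h1
  obtain ⟨m, hm⟩ := h1
  refine ⟨m, ?_⟩
  have h2 : (2 * (Real.pi : ℂ) * Complex.I) ≠ 0 := by
    simp [Real.pi_ne_zero, Complex.I_ne_zero]
  apply mul_left_cancel₀ h2
  rw [hm]; ring

lemma expL_zc {n : ℕ} (w : Fin n → ℤ) : expL n (Multiplicative.ofAdd (zc w)) = 1 := by
  funext i
  exact expu_intCast (w i)

lemma zmod_val_dvd (m : ℕ) [NeZero m] (a : ZMod m) (x : ℤ) (hx : (x : ZMod m) = a) :
    (m : ℤ) ∣ (a.val : ℤ) - x := by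
  rw [← ZMod.intCast_zmod_eq_zero_iff_dvd]
  push_cast
  rw [ZMod.natCast_val, ZMod.cast_id, hx, sub_self]

section aux

variable {n b : ℕ} (d : Fin b → ℕ) (g : Fin b → Fin n → ℤ)

noncomputable def Svec (k : Fin b → ℤ) : Fin n → ℂ :=
  ∑ j, ((k j : ℂ) / (d j : ℂ)) • zc (g j)

noncomputable def Fmap (k : Fin b → ℤ) : Fin n → ℂˣ :=
  expL n (Multiplicative.ofAdd (Svec d g k))

lemma Svec_add (k k' : Fin b → ℤ) : Svec d g (k + k') = Svec d g k + Svec d g k' := by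
  unfold Svec
  rw [← Finset.sum_add_distrib]
  refine Finset.sum_congr rfl fun j _ => ?_
  rw [← add_smul]
  congr 1
  simp only [Pi.add_apply]
  push_cast
  rw [add_div]

lemma Fmap_add (k k' : Fin b → ℤ) : Fmap d g (k + k') = Fmap d g k * Fmap d g k' := by
  unfold Fmap
  rw [Svec_add, ← map_mul]
  rfl

lemma Fmap_one (hd : ∀ j, 0 < d j) (k : Fin b → ℤ) (hk : ∀ j, (d j : ℤ) ∣ k j) :
    Fmap d g k = 1 := by
  choose q hq using hk
  have hS : Svec d g k = zc (∑ j, q j • g j) := by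
    funext i
    unfold Svec zc
    simp only [Finset.sum_apply, Pi.smul_apply, smul_eq_mul]
    push_cast [hq]
    refine Finset.sum_congr rfl fun j _ => ?_
    have hdz : (d j : ℂ) ≠ 0 := Nat.cast_ne_zero.mpr (hd j).ne'
    field_simp
  unfold Fmap
  rw [hS]
  exact expL_zc _

lemma Fmap_congr (hd : ∀ j, 0 < d j) (k k' : Fin b → ℤ)
    (h : ∀ j, (d j : ℤ) ∣ k j - k' j) : Fmap d g k = Fmap d g k' := by
  have h1 := Fmap_add d g k' (k - k')
  rw [show k' + (k - k') = k by funext j; simp, Fmap_one d g hd (k - k') (fun j => by simpa using h j),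
    mul_one] at h1
  exact h1

end aux

theorem stmt_15 (n : ℕ) (A B : Submodule ℤ (Fin n → ℤ))
    (hA : IsPrimitive A) (hB : IsPrimitive B)
    (hAB : VC A ⊓ VC B = ⊥)
    (b N : ℕ) (hbN : b ≤ N)
    (e' : Module.Basis (Fin N) ℤ ((Fin n → ℤ) ⧸ A))
    (d : Fin b → ℕ) (hd : ∀ j, 0 < d j)
    (hdiv : ∀ i j : Fin b, i ≤ j → d i ∣ d j)
    (g : Fin b → (Fin n → ℤ))
    (hgB : ∀ j, g j ∈ B)
    (hspan : Submodule.span ℤ (Set.range g) = B)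
    (hg : ∀ j, A.mkQ (g j) = (d j : ℤ) • e' (Fin.castLE hbN j)) :
    ∃ θ : Multiplicative (∀ j, ZMod (d j)) →* (Fin n → ℂˣ),
      Function.Injective θ ∧
      (∀ x, θ x ∈ (expT (VC A) ⊓ expT (VC B) : Subgroup (Fin n → ℂˣ))) ∧
      (∀ k : Fin b → ℤ,
        θ (Multiplicative.ofAdd fun j => (k j : ZMod (d j))) =
          expL n (Multiplicative.ofAdd (∑ j, ((k j : ℂ) / (d j : ℂ)) • zc (g j)))) := by
  classical
  have hne : ∀ j, NeZero (d j) := fun j => ⟨(hd j).ne'⟩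
  set val : (∀ j, ZMod (d j)) → (Fin b → ℤ) := fun x j => ((x j).val : ℤ) with hvaldef
  -- the homomorphism
  have hmul : ∀ x y : Multiplicative (∀ j, ZMod (d j)),
      Fmap d g (val (Multiplicative.toAdd (x * y))) =
        Fmap d g (val (Multiplicative.toAdd x)) * Fmap d g (val (Multiplicative.toAdd y)) := by
    intro x y
    have hcongr : Fmap d g (val (Multiplicative.toAdd (x * y))) =
        Fmap d g (val (Multiplicative.toAdd x) + val (Multiplicative.toAdd y)) := by
      apply Fmap_congr d g hd
      intro j
      haveI := hne j
      have := zmod_val_dvd (d j) (Multiplicative.toAdd x j + Multiplicative.toAdd y j)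
        (((Multiplicative.toAdd x j).val : ℤ) + ((Multiplicative.toAdd y j).val : ℤ))
        (by push_cast [ZMod.natCast_val, ZMod.cast_id]; ring)
      simpa [val] using this
    rw [hcongr, Fmap_add]
  refine ⟨MonoidHom.mk' (fun x => Fmap d g (val (Multiplicative.toAdd x))) hmul, ?_, ?_, ?_⟩
  · -- injectivity
    rw [injective_iff_map_eq_one]
    intro x hx
    set k : Fin b → ℤ := val (Multiplicative.toAdd x) with hk
    have hx' : Fmap d g k = 1 := hx
    -- each coordinate of Svec is an integer
    have h1 : ∀ i, ∃ m : ℤ, Svec d g k i = m := by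
      intro i
      apply expu_eq_one
      exact congrFun hx' i
    choose m hm using h1
    set D : ℕ := ∏ j, d j with hD
    have hDdvd : ∀ j, d j ∣ D := fun j => Finset.dvd_prod_of_mem d (Finset.mem_univ j)
    have hDq : ∀ j, d j * (D / d j) = D := fun j => Nat.mul_div_cancel' (hDdvd j)
    have hDpos : 0 < D := Finset.prod_pos fun j _ => hd j
    have hdz : ∀ j, (d j : ℂ) ≠ 0 := fun j => Nat.cast_ne_zero.mpr (hd j).ne'
    -- w = D • m
    set Dq : Fin b → ℤ := fun j => ((D / d j : ℕ) : ℤ) with hDqdef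
    have hDqD : ∀ j, (d j : ℤ) * Dq j = (D : ℤ) := by
      intro j
      show (d j : ℤ) * ((D / d j : ℕ) : ℤ) = (D : ℤ)
      exact_mod_cast hDq j
    have hDqC : ∀ j, ((Dq j : ℤ) : ℂ) = (D : ℂ) / (d j : ℂ) := by
      intro j
      rw [eq_div_iff (hdz j), mul_comm]
      have := hDqD j
      exact_mod_cast congrArg (fun z : ℤ => (z : ℂ)) this
    set w : Fin n → ℤ := ∑ j, (k j * Dq j) • g j with hw
    have hwm : w = (D : ℤ) • m := by
      funext i
      have hcast : ((w i : ℤ) : ℂ) = (((D : ℤ) • m) i : ℂ) := by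
        have h2 : ((w i : ℤ) : ℂ) = (D : ℂ) * Svec d g k i := by
          rw [hw]
          unfold Svec
          simp only [Finset.sum_apply, Pi.smul_apply, smul_eq_mul]
          rw [Int.cast_sum, Finset.mul_sum]
          refine Finset.sum_congr rfl fun j _ => ?_
          simp only [zc]
          push_cast
          rw [hDqC j]
          have := hdz j
          field_simp
        rw [h2, hm i]
        simp only [Pi.smul_apply, smul_eq_mul]
        push_cast
        ring
      exact_mod_cast hcast
    have hwB : w ∈ B := by
      rw [hw]
      exact Submodule.sum_mem B fun j _ => Submodule.smul_mem B _ (hgB j)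
    have hmB : m ∈ B := hB (D : ℤ) m (by exact_mod_cast hDpos.ne') (hwm ▸ hwB)
    have hmspan : m ∈ Submodule.span ℤ (Set.range g) := by rwa [hspan]
    obtain ⟨c, hc⟩ := (Submodule.mem_span_range_iff_exists_fun ℤ).mp hmspan
    -- g is "linearly independent": coefficients are determined
    have hgind : ∀ c₁ c₂ : Fin b → ℤ, (∑ j, c₁ j • g j) = (∑ j, c₂ j • g j) → ∀ j, c₁ j = c₂ j := by
      intro c₁ c₂ hcc j0
      have h1 := congrArg A.mkQ hcc
      simp only [map_sum, map_smul, hg, smul_smul] at h1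
      have h2 := congrArg (fun z => e'.repr z (Fin.castLE hbN j0)) h1
      simp only [map_sum, map_smul, Module.Basis.repr_self, Finset.sum_apply',
        Finsupp.smul_apply, Finsupp.single_apply, smul_eq_mul] at h2
      have hinj : ∀ j : Fin b, (Fin.castLE hbN j = Fin.castLE hbN j0) ↔ j = j0 := by
        intro j
        constructor
        · intro h; exact Fin.castLE_injective hbN h
        · intro h; rw [h]
      simp only [hinj, mul_ite, mul_one, mul_zero] at h2
      rw [Finset.sum_ite_eq', Finset.sum_ite_eq'] at h2
      simp only [Finset.mem_univ, if_true] at h2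
      have hdne : (d j0 : ℤ) ≠ 0 := by exact_mod_cast (hd j0).ne'
      exact mul_right_cancel₀ hdne h2
    -- compare coefficients
    have hsum : (∑ j, (k j * Dq j) • g j) = ∑ j, ((D : ℤ) * c j) • g j := by
      rw [← hw, hwm, ← hc, Finset.smul_sum]
      refine Finset.sum_congr rfl fun j _ => ?_
      rw [smul_smul]
    have hcoef : ∀ j, k j * Dq j = (D : ℤ) * c j := hgind _ _ hsum
    have hxzero : ∀ j, Multiplicative.toAdd x j = 0 := by
      intro j
      haveI := hne j
      have h4 : k j * Dq j = (d j : ℤ) * Dq j * c j := by rw [hcoef j, ← hDqD j]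
      have hDqne : Dq j ≠ 0 := by
        intro h0
        have hD0 := hDqD j
        rw [h0, mul_zero] at hD0
        have hDne : (D : ℤ) ≠ 0 := by exact_mod_cast hDpos.ne'
        exact hDne hD0.symm
      have h5 : k j = (d j : ℤ) * c j := by
        apply mul_right_cancel₀ hDqne
        rw [h4]; ring
      have hklt : k j < (d j : ℤ) := by
        show ((Multiplicative.toAdd x j).val : ℤ) < (d j : ℤ)
        exact_mod_cast ZMod.val_lt (Multiplicative.toAdd x j)
      have hknn : 0 ≤ k j := Int.natCast_nonneg _
      have hk0 : k j = 0 := by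
        apply Int.eq_zero_of_abs_lt_dvd ⟨c j, h5⟩
        rwa [abs_of_nonneg hknn]
      have hval0 : (Multiplicative.toAdd x j).val = 0 := by
        have h6 : ((Multiplicative.toAdd x j).val : ℤ) = 0 := hk0
        exact_mod_cast h6
      exact (ZMod.val_eq_zero _).mp hval0
    have hta : Multiplicative.toAdd x = 0 := funext hxzero
    calc x = Multiplicative.ofAdd (Multiplicative.toAdd x) := rfl
      _ = Multiplicative.ofAdd 0 := by rw [hta]
      _ = 1 := rfl
  · -- membership in the intersection of subtori
    intro x
    set k : Fin b → ℤ := val (Multiplicative.toAdd x) with hk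
    have hdz : ∀ j, (d j : ℂ) ≠ 0 := fun j => Nat.cast_ne_zero.mpr (hd j).ne'
    rw [Subgroup.mem_inf]
    constructor
    · -- in expT (VC A)
      choose hvec hh using fun j => A.mkQ_surjective (e' (Fin.castLE hbN j))
      have haA : ∀ j, g j - (d j : ℤ) • hvec j ∈ A := by
        intro j
        have h0 : A.mkQ (g j - (d j : ℤ) • hvec j) = 0 := by
          rw [map_sub, map_smul, hg j, hh j, sub_self]
        rwa [← LinearMap.mem_ker, Submodule.ker_mkQ] at h0
      set t : Fin n → ℂ := ∑ j, ((k j : ℂ) / (d j : ℂ)) • zc (g j - (d j : ℤ) • hvec j) with ht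
      refine Subgroup.mem_map.mpr ⟨Multiplicative.ofAdd t, ?_, ?_⟩
      · show t ∈ VC A
        refine Submodule.sum_mem _ fun j _ => Submodule.smul_mem _ _ ?_
        exact Submodule.subset_span ⟨g j - (d j : ℤ) • hvec j, haA j, rfl⟩
      · have hsplit : Svec d g k = t + zc (∑ j, k j • hvec j) := by
          funext i
          unfold Svec zc
          rw [ht]
          simp only [Finset.sum_apply, Pi.smul_apply, Pi.add_apply, smul_eq_mul, Pi.sub_apply,
            Pi.intCast_apply]
          rw [Int.cast_sum, ← Finset.sum_add_distrib]
          refine Finset.sum_congr rfl fun j _ => ?_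
          show ((k j : ℂ) / (d j : ℂ)) * (g j i : ℂ) =
            ((k j : ℂ) / (d j : ℂ)) * zc (g j - (d j : ℤ) • hvec j) i + ((k j • hvec j) i : ℂ)
          show ((k j : ℂ) / (d j : ℂ)) * (g j i : ℂ) =
            ((k j : ℂ) / (d j : ℂ)) * ((g j i - (d j : ℤ) * hvec j i : ℤ) : ℂ) +
              ((k j * hvec j i : ℤ) : ℂ)
          push_cast
          have := hdz j
          field_simp
          ring
        show expL n (Multiplicative.ofAdd t) = Fmap d g k
        unfold Fmap
        rw [hsplit, ofAdd_add, map_mul, expL_zc, mul_one]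
    · -- in expT (VC B)
      refine Subgroup.mem_map.mpr ⟨Multiplicative.ofAdd (Svec d g k), ?_, rfl⟩
      show Svec d g k ∈ VC B
      refine Submodule.sum_mem _ fun j _ => Submodule.smul_mem _ _ ?_
      exact Submodule.subset_span ⟨g j, hgB j, rfl⟩
  · -- formula
    intro k
    show Fmap d g (fun j => (((k j : ZMod (d j))).val : ℤ)) =
      expL n (Multiplicative.ofAdd (∑ j, ((k j : ℂ) / (d j : ℂ)) • zc (g j)))
    have : Fmap d g (fun j => (((k j : ZMod (d j))).val : ℤ)) = Fmap d g k := by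
      apply Fmap_congr d g hd
      intro j
      haveI := hne j
      exact zmod_val_dvd (d j) (k j : ZMod (d j)) (k j) rfl
    rw [this]
    rfl
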